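/- Let P₁, …, P₆ be six points in the Euclidean plane such that P₄, P₅, P₆ are collinear, P₁, P₄, P₂ are collinear, P₁, P₅, P₃ are collinear, and P₂, P₃, P₆ are collinear. Let M₂₅ be the midpoint of P₂P₅, M₆₁ the midpoint of P₆P₁, and M₄₃ the midpoint of P₄P₃. Let R₁₅₃ be the common radical center of the circumcircles of triangles P₁M₂₅M₄₃, P₅M₆₁M₄₃ and P₃M₆₁M₂₅; let R₁₄₂ be the radical center of the circumcircles of P₁M₂₅M₄₃, P₄M₂₅M₆₁ and P₂M₆₁M₄₃; let R₂₃₆ be the radical center of the circumcircles of P₂M₆₁M₄₃, P₃M₆₁M₂₅ and P₆M₂₅M₄₃; and let R₄₅₆ be the radical center of the circumcircles of P₄M₂₅M₆₁, P₅M₆₁M₄₃ and P₆M₂₅M₄₃ (each of these triangles assumed nondegenerate and each radical center assumed to exist uniquely). If M₆₁ lies on the line R₄₅₆R₁₅₃, then M₆₁ is the intersection point of lines R₄₅₆R₁₅₃ and R₁₄₂R₂₃₆, and M₂₅ is the intersection point of lines R₁₅₃R₁₄₂ and R₂₃₆R₄₅₆. -/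

import Mathlib

open EuclideanGeometry Metric

noncomputable section

/-- The Euclidean plane. -/
abbrev Pt := EuclideanSpace ℝ (Fin 2)

/-- The incenter of a nondegenerate triangle, as the weighted average of the
vertices with weights the opposite side lengths. -/
def sIncenter (A B C : Pt) : Pt :=
  (dist B C + dist C A + dist A B)⁻¹ •
    (dist B C • A + dist C A • B + dist A B • C)

/-- The inradius of a nondegenerate triangle: the distance from the incenter
to the side line `BC`. -/
def sInradius (A B C : Pt) : ℝ :=
  Metric.infDist (sIncenter A B C) (affineSpan ℝ {B, C} : Set Pt)

/-- `O` is the circumcenter of triangle `ABC` with circumradius `R`,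
i.e. all three vertices lie on the circle with center `O` and radius `R`. -/
def IsCircumcircle (O : Pt) (R : ℝ) (A B C : Pt) : Prop :=
  dist A O = R ∧ dist B O = R ∧ dist C O = R

/-- `H` is the orthocenter of triangle `ABC` (it lies on the altitudes). -/
def IsOrthocenter (H A B C : Pt) : Prop :=
  inner ℝ (H - A) (B - C) = (0:ℝ) ∧ inner ℝ (H - B) (C - A) = (0:ℝ)

/-- Power of a point `P` w.r.t. the circle with center `O` and radius `r`. -/
def power (P O : Pt) (r : ℝ) : ℝ := dist P O ^ 2 - r ^ 2

/-- The circle with center `O` and radius `r` is tangent to the line `AB`. -/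
def TangentToLine (O : Pt) (r : ℝ) (A B : Pt) : Prop :=
  Metric.infDist O (affineSpan ℝ {A, B} : Set Pt) = r

/- ### Auxiliary lemmas -/

lemma aux_pt_ext {x y : Pt} (h0 : x 0 = y 0) (h1 : x 1 = y 1) : x = y := by
  ext i; fin_cases i <;> assumption

lemma aux_power_coord (P O : Pt) (r : ℝ) :
    power P O r = (P 0 - O 0)^2 + (P 1 - O 1)^2 - r^2 := by
  unfold power
  rw [EuclideanSpace.dist_eq, Real.sq_sqrt (by positivity)]
  simp [Fin.sum_univ_two, Real.dist_eq, sq_abs]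

lemma aux_power_zero {A O : Pt} {r : ℝ} (h : dist A O = r) : power A O r = 0 := by
  unfold power; rw [h]; ring

lemma aux_sq_pos {x : ℝ} (h : x ≠ 0) : 0 < x^2 :=
  lt_of_le_of_ne (sq_nonneg x) (Ne.symm (pow_ne_zero 2 h))

lemma aux_Dpos {a b : ℝ} (h : ¬(a = 0 ∧ b = 0)) : 0 < a^2 + b^2 := by
  rcases not_and_or.mp h with h' | h'
  · nlinarith [aux_sq_pos h', sq_nonneg b]
  · nlinarith [aux_sq_pos h', sq_nonneg a]

lemma aux_tD_pos {t D E : ℝ} (h : (1-t)*D = -E) (hD : 0 < D) (hE : 0 ≤ E) :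
    0 < t*D := by nlinarith

lemma aux_neg_contra {a E : ℝ} (h : a = -E) (ha : 0 < a) (hE : 0 ≤ E) : False := by
  linarith

lemma aux_param {z0 z1 d0 d1 : ℝ} (h : d0*z1 - d1*z0 = 0) (hd : ¬(d0 = 0 ∧ d1 = 0)) :
    ∃ k : ℝ, z0 = k*d0 ∧ z1 = k*d1 := by
  by_cases h0 : d0 = 0
  · have h1 : d1 ≠ 0 := fun hh => hd ⟨h0, hh⟩
    refine ⟨z1 / d1, ?_, by field_simp⟩
    have hz : d1 * z0 = 0 := by linear_combination z1 * h0 - h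
    have hz0 : z0 = 0 := by
      rcases mul_eq_zero.mp hz with h' | h'
      · exact absurd h' h1
      · exact h'
    rw [hz0, h0]; ring
  · refine ⟨z0 / d0, by field_simp, ?_⟩
    rw [div_mul_eq_mul_div, eq_div_iff h0]
    linear_combination h

lemma aux_orth {O O' A B : Pt} {r r' : ℝ}
    (hA : power A O r = power A O' r') (hB : power B O r = power B O' r') :
    (B 0 - A 0)*(O' 0 - O 0) + (B 1 - A 1)*(O' 1 - O 1) = 0 := by
  rw [aux_power_coord, aux_power_coord] at hA hB
  linear_combination (hB - hA)/2

lemma aux_vzero {w10 w11 w20 w21 v0 v1 : ℝ} (h1 : w10*v0 + w11*v1 = 0)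
    (h2 : w20*v0 + w21*v1 = 0) (hc : w10*w21 - w11*w20 ≠ 0) : v0 = 0 ∧ v1 = 0 := by
  constructor
  · have h : (w10*w21 - w11*w20) * v0 = 0 := by linear_combination w21*h1 - w11*h2
    exact (mul_eq_zero.mp h).resolve_left hc
  · have h : (w10*w21 - w11*w20) * v1 = 0 := by linear_combination w10*h2 - w20*h1
    exact (mul_eq_zero.mp h).resolve_left hc

lemma aux_cross_of_orth {u0 u1 w0 w1 v0 v1 : ℝ} (h1 : u0*v0 + u1*v1 = 0)
    (h2 : w0*v0 + w1*v1 = 0) (hv : ¬(v0 = 0 ∧ v1 = 0)) : u0*w1 - u1*w0 = 0 := by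
  have e0 : (u0*w1 - u1*w0) * v0 = 0 := by linear_combination w1*h1 - u1*h2
  have e1 : (u0*w1 - u1*w0) * v1 = 0 := by linear_combination u0*h2 - w0*h1
  by_cases h0 : v0 = 0
  · have hv1 : v1 ≠ 0 := fun hh => hv ⟨h0, hh⟩
    rcases mul_eq_zero.mp e1 with h | h
    · exact h
    · exact absurd h hv1
  · rcases mul_eq_zero.mp e0 with h | h
    · exact h
    · exact absurd h h0

lemma aux_const {O O' A B : Pt} {r r' : ℝ} (h0 : O' 0 = O 0) (h1 : O' 1 = O 1) :
    power A O r - power A O' r' = power B O r - power B O' r' := by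
  rw [aux_power_coord, aux_power_coord, aux_power_coord, aux_power_coord, h0, h1]; ring

lemma aux_affine {O O' A B C : Pt} {r r' u : ℝ}
    (h0 : C 0 = A 0 + u*(B 0 - A 0)) (h1 : C 1 = A 1 + u*(B 1 - A 1)) :
    power C O r - power C O' r' =
      (1-u)*(power A O r - power A O' r') + u*(power B O r - power B O' r') := by
  rw [aux_power_coord, aux_power_coord, aux_power_coord, aux_power_coord,
    aux_power_coord, aux_power_coord, h0, h1]
  ring

lemma aux_secant {O U V Y : Pt} {r m0 m1 e0 e1 α β y : ℝ}
    (hU0 : U 0 = m0 + α*e0) (hU1 : U 1 = m1 + α*e1)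
    (hV0 : V 0 = m0 + β*e0) (hV1 : V 1 = m1 + β*e1)
    (hY0 : Y 0 = m0 + y*e0) (hY1 : Y 1 = m1 + y*e1)
    (hU : power U O r = 0) (hV : power V O r = 0) (hab : α ≠ β) :
    power Y O r = (y - α)*(y - β)*(e0^2 + e1^2) := by
  rw [aux_power_coord] at hU hV ⊢
  rw [hU0, hU1] at hU
  rw [hV0, hV1] at hV
  rw [hY0, hY1]
  have hne : α - β ≠ 0 := sub_ne_zero.mpr hab
  have H : (α - β) * ((m0 + y*e0 - O 0)^2 + (m1 + y*e1 - O 1)^2 - r^2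
      - (y - α)*(y - β)*(e0^2 + e1^2)) = 0 := by
    linear_combination (y - β)*hU + (α - y)*hV
  have h2 := (mul_eq_zero.mp H).resolve_left hne
  linarith

lemma aux_collinear_cross {A B C : Pt} (h : Collinear ℝ ({A, B, C} : Set Pt)) :
    (B 0 - A 0)*(C 1 - A 1) - (B 1 - A 1)*(C 0 - A 0) = 0 := by
  rw [collinear_iff_exists_forall_eq_smul_vadd] at h
  obtain ⟨p₀, v, hv⟩ := h
  obtain ⟨ra, ha⟩ := hv A (by simp)
  obtain ⟨rb, hb⟩ := hv B (by simp)
  obtain ⟨rc, hc⟩ := hv C (by simp)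
  have ha0 : A 0 = ra * v 0 + p₀ 0 := by rw [ha]; simp
  have ha1 : A 1 = ra * v 1 + p₀ 1 := by rw [ha]; simp
  have hb0 : B 0 = rb * v 0 + p₀ 0 := by rw [hb]; simp
  have hb1 : B 1 = rb * v 1 + p₀ 1 := by rw [hb]; simp
  have hc0 : C 0 = rc * v 0 + p₀ 0 := by rw [hc]; simp
  have hc1 : C 1 = rc * v 1 + p₀ 1 := by rw [hc]; simp
  rw [ha0, ha1, hb0, hb1, hc0, hc1]; ring

lemma aux_collinear_repeat (A B : Pt) : Collinear ℝ ({A, B, B} : Set Pt) := by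
  have h : ({A, B, B} : Set Pt) = {A, B} := by simp
  rw [h]; exact collinear_pair ℝ A B

lemma aux_collinear_of_cross {A B C : Pt}
    (h : (B 0 - A 0)*(C 1 - A 1) - (B 1 - A 1)*(C 0 - A 0) = 0)
    (hAB : A ≠ B) :
    Collinear ℝ ({A, B, C} : Set Pt) := by
  have hd : ¬(B 0 - A 0 = 0 ∧ B 1 - A 1 = 0) := by
    rintro ⟨e0, e1⟩
    exact hAB (aux_pt_ext (by linarith) (by linarith))
  obtain ⟨k, hk0, hk1⟩ := aux_param (d0 := B 0 - A 0) (d1 := B 1 - A 1)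
    (z0 := C 0 - A 0) (z1 := C 1 - A 1) (by linear_combination h) hd
  rw [collinear_iff_exists_forall_eq_smul_vadd]
  refine ⟨A, B - A, ?_⟩
  intro p hp
  simp only [Set.mem_insert_iff, Set.mem_singleton_iff] at hp
  rcases hp with rfl | rfl | rfl
  · exact ⟨0, by simp⟩
  · refine ⟨1, ?_⟩
    apply aux_pt_ext
    · have : ((1:ℝ) • (p - A) +ᵥ A) 0 = 1 * (p 0 - A 0) + A 0 := by
        simp [vadd_eq_add]
      rw [this]; ring
    · have : ((1:ℝ) • (p - A) +ᵥ A) 1 = 1 * (p 1 - A 1) + A 1 := by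
        simp [vadd_eq_add]
      rw [this]; ring
  · refine ⟨k, ?_⟩
    apply aux_pt_ext
    · have : (k • (B - A) +ᵥ A) 0 = k * (B 0 - A 0) + A 0 := by
        simp [vadd_eq_add]
      rw [this]; linarith
    · have : (k • (B - A) +ᵥ A) 1 = k * (B 1 - A 1) + A 1 := by
        simp [vadd_eq_add]
      rw [this]; linarith

lemma aux_mem_span {A B C : Pt} (hAB : A ≠ B)
    (h : (B 0 - A 0)*(C 1 - A 1) - (B 1 - A 1)*(C 0 - A 0) = 0) :
    C ∈ affineSpan ℝ ({A, B} : Set Pt) :=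
  (aux_collinear_of_cross h hAB).mem_affineSpan_of_mem_of_ne
    (by simp) (by simp) (by simp) hAB

lemma aux_mid {M P Q : Pt} (h : M = midpoint ℝ P Q) (i : Fin 2) :
    M i = (P i + Q i)/2 := by
  rw [h, midpoint_eq_smul_add]
  simp
  ring

/-- Gauss line theorem and radical lines 2. -/
theorem stmt_7
    (P₁ P₂ P₃ P₄ P₅ P₆ : Pt)
    (h456 : Collinear ℝ ({P₄, P₅, P₆} : Set Pt))
    (h142 : Collinear ℝ ({P₁, P₄, P₂} : Set Pt))
    (h153 : Collinear ℝ ({P₁, P₅, P₃} : Set Pt))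
    (h236 : Collinear ℝ ({P₂, P₃, P₆} : Set Pt))
    (M₂₅ M₆₁ M₄₃ : Pt)
    (hM₂₅ : M₂₅ = midpoint ℝ P₂ P₅)
    (hM₆₁ : M₆₁ = midpoint ℝ P₆ P₁)
    (hM₄₃ : M₄₃ = midpoint ℝ P₄ P₃)
    -- the six circumcircles (each triangle nondegenerate)
    (hT₁ : ¬ Collinear ℝ ({P₁, M₂₅, M₄₃} : Set Pt))
    (hT₂ : ¬ Collinear ℝ ({P₅, M₆₁, M₄₃} : Set Pt))
    (hT₃ : ¬ Collinear ℝ ({P₃, M₆₁, M₂₅} : Set Pt))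
    (hT₄ : ¬ Collinear ℝ ({P₄, M₂₅, M₆₁} : Set Pt))
    (hT₅ : ¬ Collinear ℝ ({P₂, M₆₁, M₄₃} : Set Pt))
    (hT₆ : ¬ Collinear ℝ ({P₆, M₂₅, M₄₃} : Set Pt))
    (O₁ O₂ O₃ O₄ O₅ O₆ : Pt) (R₁ R₂ R₃ R₄ R₅ R₆ : ℝ)
    (hO₁ : IsCircumcircle O₁ R₁ P₁ M₂₅ M₄₃)
    (hO₂ : IsCircumcircle O₂ R₂ P₅ M₆₁ M₄₃)
    (hO₃ : IsCircumcircle O₃ R₃ P₃ M₆₁ M₂₅)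
    (hO₄ : IsCircumcircle O₄ R₄ P₄ M₂₅ M₆₁)
    (hO₅ : IsCircumcircle O₅ R₅ P₂ M₆₁ M₄₃)
    (hO₆ : IsCircumcircle O₆ R₆ P₆ M₂₅ M₄₃)
    -- the four radical centers, each assumed to exist and be unique
    (R153 : Pt)
    (hR153a : power R153 O₁ R₁ = power R153 O₂ R₂)
    (hR153b : power R153 O₂ R₂ = power R153 O₃ R₃)
    (hR153U : ∀ Y : Pt, power Y O₁ R₁ = power Y O₂ R₂ →
      power Y O₂ R₂ = power Y O₃ R₃ → Y = R153)
    (R142 : Pt)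
    (hR142a : power R142 O₁ R₁ = power R142 O₄ R₄)
    (hR142b : power R142 O₄ R₄ = power R142 O₅ R₅)
    (hR142U : ∀ Y : Pt, power Y O₁ R₁ = power Y O₄ R₄ →
      power Y O₄ R₄ = power Y O₅ R₅ → Y = R142)
    (R236 : Pt)
    (hR236a : power R236 O₅ R₅ = power R236 O₃ R₃)
    (hR236b : power R236 O₃ R₃ = power R236 O₆ R₆)
    (hR236U : ∀ Y : Pt, power Y O₅ R₅ = power Y O₃ R₃ →
      power Y O₃ R₃ = power Y O₆ R₆ → Y = R236)
    (R456 : Pt)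
    (hR456a : power R456 O₄ R₄ = power R456 O₂ R₂)
    (hR456b : power R456 O₂ R₂ = power R456 O₆ R₆)
    (hR456U : ∀ Y : Pt, power Y O₄ R₄ = power Y O₂ R₂ →
      power Y O₂ R₂ = power Y O₆ R₆ → Y = R456)
    -- hypothesis: M₆₁ lies on the line R₄₅₆R₁₅₃
    (hmem : M₆₁ ∈ affineSpan ℝ ({R456, R153} : Set Pt)) :
    M₆₁ ∈ affineSpan ℝ ({R456, R153} : Set Pt) ∧
    M₆₁ ∈ affineSpan ℝ ({R142, R236} : Set Pt) ∧
    M₂₅ ∈ affineSpan ℝ ({R153, R142} : Set Pt) ∧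
    M₂₅ ∈ affineSpan ℝ ({R236, R456} : Set Pt) := by
  -- distinctness of the three midpoints
  have hne2543 : M₂₅ ≠ M₄₃ := by
    intro h; apply hT₁; rw [h]; exact aux_collinear_repeat P₁ M₄₃
  have hne6125 : M₆₁ ≠ M₂₅ := by
    intro h; apply hT₄; rw [← h]; exact aux_collinear_repeat P₄ M₆₁
  have hne6143 : M₆₁ ≠ M₄₃ := by
    intro h; apply hT₂; rw [h]; exact aux_collinear_repeat P₅ M₄₃
  -- the Gauss line: M₆₁ lies on the line M₂₅M₄₃
  have c456 := aux_collinear_cross h456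
  have c142 := aux_collinear_cross h142
  have c153 := aux_collinear_cross h153
  have c236 := aux_collinear_cross h236
  have hG : (M₄₃ 0 - M₂₅ 0)*(M₆₁ 1 - M₂₅ 1) - (M₄₃ 1 - M₂₅ 1)*(M₆₁ 0 - M₂₅ 0) = 0 := by
    rw [aux_mid hM₂₅ 0, aux_mid hM₂₅ 1, aux_mid hM₆₁ 0, aux_mid hM₆₁ 1,
      aux_mid hM₄₃ 0, aux_mid hM₄₃ 1]
    linear_combination (c153 + c236 - c456 - c142)/4
  have hd : ¬(M₄₃ 0 - M₂₅ 0 = 0 ∧ M₄₃ 1 - M₂₅ 1 = 0) := by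
    rintro ⟨e0, e1⟩
    exact hne2543 (aux_pt_ext (by linear_combination -e0) (by linear_combination -e1))
  obtain ⟨t, ht0', ht1'⟩ := aux_param hG hd
  have ht0 : M₆₁ 0 = M₂₅ 0 + t*(M₄₃ 0 - M₂₅ 0) := by linear_combination ht0'
  have ht1 : M₆₁ 1 = M₂₅ 1 + t*(M₄₃ 1 - M₂₅ 1) := by linear_combination ht1'
  have hDpos : 0 < (M₄₃ 0 - M₂₅ 0)^2 + (M₄₃ 1 - M₂₅ 1)^2 := aux_Dpos hd
  have ht_ne0 : t ≠ 0 := by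
    intro h
    exact hne6125 (aux_pt_ext (by rw [ht0, h]; ring) (by rw [ht1, h]; ring))
  have ht_ne1 : t ≠ 1 := by
    intro h
    exact hne6143 (aux_pt_ext (by rw [ht0, h]; ring) (by rw [ht1, h]; ring))
  -- power-zero facts
  have z1a : power P₁ O₁ R₁ = 0 := aux_power_zero hO₁.1
  have z1b : power M₂₅ O₁ R₁ = 0 := aux_power_zero hO₁.2.1
  have z1c : power M₄₃ O₁ R₁ = 0 := aux_power_zero hO₁.2.2
  have z2a : power P₅ O₂ R₂ = 0 := aux_power_zero hO₂.1
  have z2b : power M₆₁ O₂ R₂ = 0 := aux_power_zero hO₂.2.1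
  have z2c : power M₄₃ O₂ R₂ = 0 := aux_power_zero hO₂.2.2
  have z3a : power P₃ O₃ R₃ = 0 := aux_power_zero hO₃.1
  have z3b : power M₆₁ O₃ R₃ = 0 := aux_power_zero hO₃.2.1
  have z3c : power M₂₅ O₃ R₃ = 0 := aux_power_zero hO₃.2.2
  have z4a : power P₄ O₄ R₄ = 0 := aux_power_zero hO₄.1
  have z4b : power M₂₅ O₄ R₄ = 0 := aux_power_zero hO₄.2.1
  have z4c : power M₆₁ O₄ R₄ = 0 := aux_power_zero hO₄.2.2
  have z5a : power P₂ O₅ R₅ = 0 := aux_power_zero hO₅.1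
  have z5b : power M₆₁ O₅ R₅ = 0 := aux_power_zero hO₅.2.1
  have z5c : power M₄₃ O₅ R₅ = 0 := aux_power_zero hO₅.2.2
  have z6a : power P₆ O₆ R₆ = 0 := aux_power_zero hO₆.1
  have z6b : power M₂₅ O₆ R₆ = 0 := aux_power_zero hO₆.2.1
  have z6c : power M₄₃ O₆ R₆ = 0 := aux_power_zero hO₆.2.2
  -- key power values along the Gauss line
  have pa1 : power M₆₁ O₁ R₁
      = t*(t-1)*((M₄₃ 0 - M₂₅ 0)^2 + (M₄₃ 1 - M₂₅ 1)^2) := by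
    have h := aux_secant (O := O₁) (r := R₁) (U := M₂₅) (V := M₄₃) (Y := M₆₁)
      (m0 := M₂₅ 0) (m1 := M₂₅ 1) (e0 := M₄₃ 0 - M₂₅ 0) (e1 := M₄₃ 1 - M₂₅ 1)
      (α := 0) (β := 1) (y := t)
      (by ring) (by ring) (by ring) (by ring) ht0 ht1 z1b z1c (by norm_num)
    linear_combination h
  have pa6 : power M₆₁ O₆ R₆
      = t*(t-1)*((M₄₃ 0 - M₂₅ 0)^2 + (M₄₃ 1 - M₂₅ 1)^2) := by
    have h := aux_secant (O := O₆) (r := R₆) (U := M₂₅) (V := M₄₃) (Y := M₆₁)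
      (m0 := M₂₅ 0) (m1 := M₂₅ 1) (e0 := M₄₃ 0 - M₂₅ 0) (e1 := M₄₃ 1 - M₂₅ 1)
      (α := 0) (β := 1) (y := t)
      (by ring) (by ring) (by ring) (by ring) ht0 ht1 z6b z6c (by norm_num)
    linear_combination h
  have pb2 : power M₂₅ O₂ R₂
      = t*((M₄₃ 0 - M₂₅ 0)^2 + (M₄₃ 1 - M₂₅ 1)^2) := by
    have h := aux_secant (O := O₂) (r := R₂) (U := M₆₁) (V := M₄₃) (Y := M₂₅)
      (m0 := M₂₅ 0) (m1 := M₂₅ 1) (e0 := M₄₃ 0 - M₂₅ 0) (e1 := M₄₃ 1 - M₂₅ 1)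
      (α := t) (β := 1) (y := 0)
      ht0 ht1 (by ring) (by ring) (by ring) (by ring) z2b z2c ht_ne1
    linear_combination h
  have pb5 : power M₂₅ O₅ R₅
      = t*((M₄₃ 0 - M₂₅ 0)^2 + (M₄₃ 1 - M₂₅ 1)^2) := by
    have h := aux_secant (O := O₅) (r := R₅) (U := M₆₁) (V := M₄₃) (Y := M₂₅)
      (m0 := M₂₅ 0) (m1 := M₂₅ 1) (e0 := M₄₃ 0 - M₂₅ 0) (e1 := M₄₃ 1 - M₂₅ 1)
      (α := t) (β := 1) (y := 0)
      ht0 ht1 (by ring) (by ring) (by ring) (by ring) z5b z5c ht_ne1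
    linear_combination h
  have pc3 : power M₄₃ O₃ R₃
      = (1-t)*((M₄₃ 0 - M₂₅ 0)^2 + (M₄₃ 1 - M₂₅ 1)^2) := by
    have h := aux_secant (O := O₃) (r := R₃) (U := M₆₁) (V := M₂₅) (Y := M₄₃)
      (m0 := M₂₅ 0) (m1 := M₂₅ 1) (e0 := M₄₃ 0 - M₂₅ 0) (e1 := M₄₃ 1 - M₂₅ 1)
      (α := t) (β := 0) (y := 1)
      ht0 ht1 (by ring) (by ring) (by ring) (by ring) z3b z3c ht_ne0
    linear_combination h
  have haD : t*(t-1)*((M₄₃ 0 - M₂₅ 0)^2 + (M₄₃ 1 - M₂₅ 1)^2) ≠ 0 :=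
    mul_ne_zero (mul_ne_zero ht_ne0 (sub_ne_zero.mpr ht_ne1)) hDpos.ne'
  have hbD : t*((M₄₃ 0 - M₂₅ 0)^2 + (M₄₃ 1 - M₂₅ 1)^2) ≠ 0 :=
    mul_ne_zero ht_ne0 hDpos.ne'
  -- distinctness of midpoints from radical centers
  have hne61153 : M₆₁ ≠ R153 := by
    intro h
    have h2 := hR153a
    rw [← h, pa1, z2b] at h2
    exact haD h2
  have hne61456 : M₆₁ ≠ R456 := by
    intro h
    have h2 := hR456b
    rw [← h, z2b, pa6] at h2
    exact haD h2.symm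
  have hne61142 : M₆₁ ≠ R142 := by
    intro h
    have h2 := hR142a
    rw [← h, pa1, z4c] at h2
    exact haD h2
  have hne61236 : M₆₁ ≠ R236 := by
    intro h
    have h2 := hR236b
    rw [← h, z3b, pa6] at h2
    exact haD h2.symm
  have hne25153 : M₂₅ ≠ R153 := by
    intro h
    have h2 := hR153a
    rw [← h, z1b, pb2] at h2
    exact hbD h2.symm
  have hR456ne153 : R456 ≠ R153 := by
    intro h
    rw [h, Set.pair_eq_singleton] at hmem
    rw [AffineSubspace.mem_affineSpan_singleton] at hmem
    exact hne61153 hmem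
  -- unpack the membership hypothesis
  obtain ⟨r, hr⟩ : ∃ r : ℝ, r • (R153 -ᵥ R456) = M₆₁ -ᵥ R456 := by
    have h2 : (M₆₁ -ᵥ R456) +ᵥ R456 ∈ affineSpan ℝ ({R456, R153} : Set Pt) := by
      simpa using hmem
    rwa [vadd_left_mem_affineSpan_pair] at h2
  have hr0 : M₆₁ 0 = R456 0 + r*(R153 0 - R456 0) := by
    have h0 : r * (R153 0 - R456 0) = M₆₁ 0 - R456 0 := congrFun (congrArg WithLp.ofLp hr) 0
    linear_combination -h0
  have hr1 : M₆₁ 1 = R456 1 + r*(R153 1 - R456 1) := by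
    have h1 : r * (R153 1 - R456 1) = M₆₁ 1 - R456 1 := congrFun (congrArg WithLp.ofLp hr) 1
    linear_combination -h1
  have hr_ne1 : r ≠ 1 := by
    intro h
    exact hne61153 (aux_pt_ext (by rw [hr0, h]; ring) (by rw [hr1, h]; ring))
  have hr_ne0 : r ≠ 0 := by
    intro h
    exact hne61456 (aux_pt_ext (by rw [hr0, h]; ring) (by rw [hr1, h]; ring))
  -- radical-axis consequences of `hmem`
  have e23_456 : power R456 O₂ R₂ = power R456 O₃ R₃ := by
    have base := aux_affine (O := O₂) (O' := O₃) (r := R₂) (r' := R₃)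
      (A := R456) (B := R153) (C := M₆₁) (u := r) hr0 hr1
    rw [z2b, z3b] at base
    have h2 : (1 - r)*(power R456 O₂ R₂ - power R456 O₃ R₃) = 0 := by
      linear_combination -base - r*hR153b
    have h3 := (mul_eq_zero.mp h2).resolve_left (sub_ne_zero.mpr (Ne.symm hr_ne1))
    linear_combination h3
  have e24_153 : power R153 O₂ R₂ = power R153 O₄ R₄ := by
    have base := aux_affine (O := O₂) (O' := O₄) (r := R₂) (r' := R₄)
      (A := R456) (B := R153) (C := M₆₁) (u := r) hr0 hr1
    rw [z2b, z4c] at base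
    have h2 : r*(power R153 O₂ R₂ - power R153 O₄ R₄) = 0 := by
      linear_combination -base + (1-r)*hR456a
    have h3 := (mul_eq_zero.mp h2).resolve_left hr_ne0
    linear_combination h3
  -- the circles `3` and `4` have the same power function
  have key34 : ∀ Y : Pt, power Y O₃ R₃ = power Y O₄ R₄ := by
    have e34_61 : power M₆₁ O₃ R₃ = power M₆₁ O₄ R₄ := by rw [z3b, z4c]
    have e34_153 : power R153 O₃ R₃ = power R153 O₄ R₄ := hR153b.symm.trans e24_153
    have e34_25 : power M₂₅ O₃ R₃ = power M₂₅ O₄ R₄ := by rw [z3c, z4b]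
    have o1 := aux_orth (A := M₆₁) (B := R153) e34_61 e34_153
    have o2 := aux_orth (A := M₆₁) (B := M₂₅) e34_61 e34_25
    by_cases hcr : (R153 0 - M₆₁ 0)*(M₂₅ 1 - M₆₁ 1)
        - (R153 1 - M₆₁ 1)*(M₂₅ 0 - M₆₁ 0) = 0
    · exfalso
      have hw : ¬(R153 0 - M₆₁ 0 = 0 ∧ R153 1 - M₆₁ 1 = 0) := by
        rintro ⟨a, b⟩
        exact hne61153 (aux_pt_ext (by linear_combination -a) (by linear_combination -b))
      obtain ⟨u, hu0, hu1⟩ := aux_param (d0 := R153 0 - M₆₁ 0) (d1 := R153 1 - M₆₁ 1)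
        (z0 := M₂₅ 0 - M₆₁ 0) (z1 := M₂₅ 1 - M₆₁ 1) (by linear_combination hcr) hw
      have hu0' : M₂₅ 0 = M₆₁ 0 + u*(R153 0 - M₆₁ 0) := by linear_combination hu0
      have hu1' : M₂₅ 1 = M₆₁ 1 + u*(R153 1 - M₆₁ 1) := by linear_combination hu1
      have base := aux_affine (O := O₁) (O' := O₃) (r := R₁) (r' := R₃)
        (A := M₆₁) (B := R153) (C := M₂₅) (u := u) hu0' hu1'
      rw [z1b, z3c, pa1, z3b] at base
      have q153 : power R153 O₁ R₁ = power R153 O₃ R₃ := hR153a.trans hR153b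
      have h2 : (1-u)*(t*(t-1)*((M₄₃ 0 - M₂₅ 0)^2 + (M₄₃ 1 - M₂₅ 1)^2)) = 0 := by
        linear_combination -base - u*q153
      have h3 := (mul_eq_zero.mp h2).resolve_right haD
      have hu_eq : u = 1 := by linear_combination -h3
      exact hne25153 (aux_pt_ext (by rw [hu0', hu_eq]; ring) (by rw [hu1', hu_eq]; ring))
    · have hv := aux_vzero o1 o2 hcr
      intro Y
      have hc := aux_const (O := O₃) (O' := O₄) (r := R₃) (r' := R₄)
        (sub_eq_zero.mp hv.1) (sub_eq_zero.mp hv.2) (A := Y) (B := M₆₁)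
      rw [z3b, z4c] at hc
      linear_combination hc
  -- circle `3` also passes through `P₄`; hence `t > 1`-type sign facts
  have hp4 : power P₄ O₃ R₃ = 0 := (key34 P₄).trans z4a
  have psec3 : power M₄₃ O₃ R₃
      = -(((P₄ 0 - M₄₃ 0)^2 + (P₄ 1 - M₄₃ 1)^2)) := by
    have h := aux_secant (O := O₃) (r := R₃) (U := P₄) (V := P₃) (Y := M₄₃)
      (m0 := M₄₃ 0) (m1 := M₄₃ 1) (e0 := P₄ 0 - M₄₃ 0) (e1 := P₄ 1 - M₄₃ 1)
      (α := 1) (β := -1) (y := 0)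
      (by ring) (by ring)
      (by have := aux_mid hM₄₃ 0; linarith) (by have := aux_mid hM₄₃ 1; linarith)
      (by ring) (by ring) hp4 z3a (by norm_num)
    linear_combination h
  have hbpos : 0 < t*((M₄₃ 0 - M₂₅ 0)^2 + (M₄₃ 1 - M₂₅ 1)^2) :=
    aux_tD_pos (pc3.symm.trans psec3) hDpos (by positivity)
  refine ⟨hmem, ?_, ?_, ?_⟩
  -- Goal 2 : M₆₁ ∈ line (R142, R236), the radical axis of circles 3 and 5
  · have q142 : power R142 O₃ R₃ = power R142 O₅ R₅ := (key34 R142).trans hR142b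
    have q236 : power R236 O₃ R₃ = power R236 O₅ R₅ := hR236a.symm
    have q61 : power M₆₁ O₃ R₃ = power M₆₁ O₅ R₅ := by rw [z3b, z5b]
    have hv35 : ¬(O₅ 0 - O₃ 0 = 0 ∧ O₅ 1 - O₃ 1 = 0) := by
      rintro ⟨h0, h1⟩
      have hc := aux_const (O := O₃) (O' := O₅) (r := R₃) (r' := R₅)
        (sub_eq_zero.mp h0) (sub_eq_zero.mp h1) (A := M₂₅) (B := M₆₁)
      rw [z3c, pb5, z3b, z5b] at hc
      exact hbD (by linear_combination -hc)
    have o_a := aux_orth (A := R142) (B := R236) q142 q236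
    have o_b := aux_orth (A := R142) (B := M₆₁) q142 q61
    have hcross := aux_cross_of_orth o_a o_b hv35
    by_cases h12 : R142 = R236
    · exfalso
      subst h12
      have e35Y : power R142 O₃ R₃ = power R142 O₅ R₅ := hR236a.symm
      have e16Y : power R142 O₁ R₁ = power R142 O₆ R₆ :=
        hR142a.trans (hR142b.trans (hR236a.trans hR236b))
      by_cases hv16 : O₆ 0 - O₁ 0 = 0 ∧ O₆ 1 - O₁ 1 = 0
      · have hc := aux_const (O := O₁) (O' := O₆) (r := R₁) (r' := R₆)
          (sub_eq_zero.mp hv16.1) (sub_eq_zero.mp hv16.2) (A := R153) (B := M₂₅)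
        rw [z1b, z6b] at hc
        have e6_153 : power R153 O₁ R₁ = power R153 O₆ R₆ := by linear_combination hc
        have : R153 = R456 :=
          hR456U R153 e24_153.symm (hR153a.symm.trans e6_153)
        exact hR456ne153 this.symm
      · have h2516 : power M₂₅ O₁ R₁ = power M₂₅ O₆ R₆ := by rw [z1b, z6b]
        have h4316 : power M₄₃ O₁ R₁ = power M₄₃ O₆ R₆ := by rw [z1c, z6c]
        have o_c := aux_orth (A := M₂₅) (B := M₄₃) h2516 h4316
        have o_d := aux_orth (A := M₂₅) (B := R142) h2516 e16Y
        have crossY := aux_cross_of_orth o_c o_d hv16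
        obtain ⟨y, hy0, hy1⟩ := aux_param (d0 := M₄₃ 0 - M₂₅ 0) (d1 := M₄₃ 1 - M₂₅ 1)
          (z0 := R142 0 - M₂₅ 0) (z1 := R142 1 - M₂₅ 1) (by linear_combination crossY) hd
        have hy0' : R142 0 = M₂₅ 0 + y*(M₄₃ 0 - M₂₅ 0) := by linear_combination hy0
        have hy1' : R142 1 = M₂₅ 1 + y*(M₄₃ 1 - M₂₅ 1) := by linear_combination hy1
        have py3 : power R142 O₃ R₃
            = (y - t)*(y - 0)*((M₄₃ 0 - M₂₅ 0)^2 + (M₄₃ 1 - M₂₅ 1)^2) :=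
          aux_secant (O := O₃) (r := R₃) (U := M₆₁) (V := M₂₅) (Y := R142)
            (m0 := M₂₅ 0) (m1 := M₂₅ 1) (e0 := M₄₃ 0 - M₂₅ 0) (e1 := M₄₃ 1 - M₂₅ 1)
            (α := t) (β := 0) (y := y)
            ht0 ht1 (by ring) (by ring) hy0' hy1' z3b z3c ht_ne0
        have py5 : power R142 O₅ R₅
            = (y - t)*(y - 1)*((M₄₃ 0 - M₂₅ 0)^2 + (M₄₃ 1 - M₂₅ 1)^2) :=
          aux_secant (O := O₅) (r := R₅) (U := M₆₁) (V := M₄₃) (Y := R142)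
            (m0 := M₂₅ 0) (m1 := M₂₅ 1) (e0 := M₄₃ 0 - M₂₅ 0) (e1 := M₄₃ 1 - M₂₅ 1)
            (α := t) (β := 1) (y := y)
            ht0 ht1 (by ring) (by ring) hy0' hy1' z5b z5c ht_ne1
        have hyt : (y - t)*((M₄₃ 0 - M₂₅ 0)^2 + (M₄₃ 1 - M₂₅ 1)^2) = 0 := by
          linear_combination -py3 + py5 + e35Y
        have hy_eq : y = t := by
          have h5 := (mul_eq_zero.mp hyt).resolve_right hDpos.ne'
          linear_combination h5
        have : R142 = M₆₁ :=
          aux_pt_ext (by rw [hy0', hy_eq, ht0]) (by rw [hy1', hy_eq, ht1])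
        exact hne61142 this.symm
    · exact aux_mem_span h12 hcross
  -- Goal 3 : M₂₅ ∈ line (R153, R142), the radical axis of circles 1 and 3
  · have q153 : power R153 O₁ R₁ = power R153 O₃ R₃ := hR153a.trans hR153b
    have q142 : power R142 O₁ R₁ = power R142 O₃ R₃ := hR142a.trans (key34 R142).symm
    have q25 : power M₂₅ O₁ R₁ = power M₂₅ O₃ R₃ := by rw [z1b, z3c]
    have hv13 : ¬(O₃ 0 - O₁ 0 = 0 ∧ O₃ 1 - O₁ 1 = 0) := by
      rintro ⟨h0, h1⟩
      have hc := aux_const (O := O₁) (O' := O₃) (r := R₁) (r' := R₃)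
        (sub_eq_zero.mp h0) (sub_eq_zero.mp h1) (A := M₆₁) (B := M₂₅)
      rw [pa1, z3b, z1b, z3c] at hc
      exact haD (by linear_combination hc)
    have o_a := aux_orth (A := R153) (B := R142) q153 q142
    have o_b := aux_orth (A := R153) (B := M₂₅) q153 q25
    have hcross := aux_cross_of_orth o_a o_b hv13
    by_cases h13 : R153 = R142
    · exfalso
      have e25Y : power R153 O₂ R₂ = power R153 O₅ R₅ := by
        rw [h13] at e24_153 ⊢
        exact e24_153.trans hR142b
      by_cases hv25 : O₅ 0 - O₂ 0 = 0 ∧ O₅ 1 - O₂ 1 = 0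
      · have hc := aux_const (O := O₂) (O' := O₅) (r := R₂) (r' := R₅)
          (sub_eq_zero.mp hv25.1) (sub_eq_zero.mp hv25.2) (A := P₂) (B := M₆₁)
        rw [z5a, z2b, z5b] at hc
        have hp2 : power P₂ O₂ R₂ = 0 := by linear_combination hc
        have ps : power M₂₅ O₂ R₂
            = -(((P₂ 0 - M₂₅ 0)^2 + (P₂ 1 - M₂₅ 1)^2)) := by
          have h := aux_secant (O := O₂) (r := R₂) (U := P₂) (V := P₅) (Y := M₂₅)
            (m0 := M₂₅ 0) (m1 := M₂₅ 1) (e0 := P₂ 0 - M₂₅ 0) (e1 := P₂ 1 - M₂₅ 1)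
            (α := 1) (β := -1) (y := 0)
            (by ring) (by ring)
            (by linear_combination -2*(aux_mid hM₂₅ 0)) (by linear_combination -2*(aux_mid hM₂₅ 1))
            (by ring) (by ring) hp2 z2a (by norm_num)
          linear_combination h
        rw [pb2] at ps
        exact aux_neg_contra ps hbpos (by positivity)
      · have h6125 : power M₆₁ O₂ R₂ = power M₆₁ O₅ R₅ := by rw [z2b, z5b]
        have h4325 : power M₄₃ O₂ R₂ = power M₄₃ O₅ R₅ := by rw [z2c, z5c]
        have o_c := aux_orth (A := M₆₁) (B := M₄₃) h6125 h4325
        have o_d := aux_orth (A := M₆₁) (B := R153) h6125 e25Y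
        have crossL := aux_cross_of_orth o_c o_d hv25
        have k0 : M₄₃ 0 - M₆₁ 0 = (1-t)*(M₄₃ 0 - M₂₅ 0) := by
          rw [ht0]; ring
        have k1 : M₄₃ 1 - M₆₁ 1 = (1-t)*(M₄₃ 1 - M₂₅ 1) := by
          rw [ht1]; ring
        have h1t : (1 : ℝ) - t ≠ 0 := sub_ne_zero.mpr (Ne.symm ht_ne1)
        have crossd : (M₄₃ 0 - M₂₅ 0)*(R153 1 - M₆₁ 1)
            - (M₄₃ 1 - M₂₅ 1)*(R153 0 - M₆₁ 0) = 0 := by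
          have h2 : (1-t)*((M₄₃ 0 - M₂₅ 0)*(R153 1 - M₆₁ 1)
              - (M₄₃ 1 - M₂₅ 1)*(R153 0 - M₆₁ 0)) = 0 := by
            linear_combination crossL - (R153 1 - M₆₁ 1)*k0 + (R153 0 - M₆₁ 0)*k1
          exact (mul_eq_zero.mp h2).resolve_left h1t
        obtain ⟨k, hk0, hk1⟩ := aux_param (d0 := M₄₃ 0 - M₂₅ 0) (d1 := M₄₃ 1 - M₂₅ 1)
          (z0 := R153 0 - M₆₁ 0) (z1 := R153 1 - M₆₁ 1) (by linear_combination crossd) hd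
        have hy0' : R153 0 = M₂₅ 0 + (t + k)*(M₄₃ 0 - M₂₅ 0) := by
          linear_combination ht0 + hk0
        have hy1' : R153 1 = M₂₅ 1 + (t + k)*(M₄₃ 1 - M₂₅ 1) := by
          linear_combination ht1 + hk1
        have py2 : power R153 O₂ R₂
            = ((t+k) - t)*((t+k) - 1)*((M₄₃ 0 - M₂₅ 0)^2 + (M₄₃ 1 - M₂₅ 1)^2) :=
          aux_secant (O := O₂) (r := R₂) (U := M₆₁) (V := M₄₃) (Y := R153)
            (m0 := M₂₅ 0) (m1 := M₂₅ 1) (e0 := M₄₃ 0 - M₂₅ 0) (e1 := M₄₃ 1 - M₂₅ 1)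
            (α := t) (β := 1) (y := t + k)
            ht0 ht1 (by ring) (by ring) hy0' hy1' z2b z2c ht_ne1
        have py3 : power R153 O₃ R₃
            = ((t+k) - t)*((t+k) - 0)*((M₄₃ 0 - M₂₅ 0)^2 + (M₄₃ 1 - M₂₅ 1)^2) :=
          aux_secant (O := O₃) (r := R₃) (U := M₆₁) (V := M₂₅) (Y := R153)
            (m0 := M₂₅ 0) (m1 := M₂₅ 1) (e0 := M₄₃ 0 - M₂₅ 0) (e1 := M₄₃ 1 - M₂₅ 1)
            (α := t) (β := 0) (y := t + k)
            ht0 ht1 (by ring) (by ring) hy0' hy1' z3b z3c ht_ne0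
        have hk' : k*((M₄₃ 0 - M₂₅ 0)^2 + (M₄₃ 1 - M₂₅ 1)^2) = 0 := by
          linear_combination py2 - py3 - hR153b
        have hk_eq : k = 0 := by
          exact (mul_eq_zero.mp hk').resolve_right hDpos.ne'
        have : R153 = M₆₁ := by
          apply aux_pt_ext
          · rw [hy0', hk_eq, ht0]; ring
          · rw [hy1', hk_eq, ht1]; ring
        exact hne61153 this.symm
    · exact aux_mem_span h13 hcross
  -- Goal 4 : M₂₅ ∈ line (R236, R456), the radical axis of circles 3 and 6
  · have q236 : power R236 O₃ R₃ = power R236 O₆ R₆ := hR236b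
    have q456 : power R456 O₃ R₃ = power R456 O₆ R₆ := e23_456.symm.trans hR456b
    have q25 : power M₂₅ O₃ R₃ = power M₂₅ O₆ R₆ := by rw [z3c, z6b]
    have hv36 : ¬(O₆ 0 - O₃ 0 = 0 ∧ O₆ 1 - O₃ 1 = 0) := by
      rintro ⟨h0, h1⟩
      have hc := aux_const (O := O₃) (O' := O₆) (r := R₃) (r' := R₆)
        (sub_eq_zero.mp h0) (sub_eq_zero.mp h1) (A := M₆₁) (B := M₂₅)
      rw [z3b, pa6, z3c, z6b] at hc
      exact haD (by linarith)
    have o_a := aux_orth (A := R236) (B := R456) q236 q456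
    have o_b := aux_orth (A := R236) (B := M₂₅) q236 q25
    have hcross := aux_cross_of_orth o_a o_b hv36
    by_cases h46 : R236 = R456
    · exfalso
      have e25Y : power R236 O₂ R₂ = power R236 O₅ R₅ := by
        rw [h46]
        exact e23_456.trans (by rw [← h46]; exact hR236a.symm)
      have e35Y : power R236 O₃ R₃ = power R236 O₅ R₅ := hR236a.symm
      by_cases hv25 : O₅ 0 - O₂ 0 = 0 ∧ O₅ 1 - O₂ 1 = 0
      · have hc := aux_const (O := O₂) (O' := O₅) (r := R₂) (r' := R₅)
          (sub_eq_zero.mp hv25.1) (sub_eq_zero.mp hv25.2) (A := P₂) (B := M₆₁)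
        rw [z5a, z2b, z5b] at hc
        have hp2 : power P₂ O₂ R₂ = 0 := by linear_combination hc
        have ps : power M₂₅ O₂ R₂
            = -(((P₂ 0 - M₂₅ 0)^2 + (P₂ 1 - M₂₅ 1)^2)) := by
          have h := aux_secant (O := O₂) (r := R₂) (U := P₂) (V := P₅) (Y := M₂₅)
            (m0 := M₂₅ 0) (m1 := M₂₅ 1) (e0 := P₂ 0 - M₂₅ 0) (e1 := P₂ 1 - M₂₅ 1)
            (α := 1) (β := -1) (y := 0)
            (by ring) (by ring)
            (by linear_combination -2*(aux_mid hM₂₅ 0)) (by linear_combination -2*(aux_mid hM₂₅ 1))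
            (by ring) (by ring) hp2 z2a (by norm_num)
          linear_combination h
        rw [pb2] at ps
        exact aux_neg_contra ps hbpos (by positivity)
      · have h6125 : power M₆₁ O₂ R₂ = power M₆₁ O₅ R₅ := by rw [z2b, z5b]
        have h4325 : power M₄₃ O₂ R₂ = power M₄₃ O₅ R₅ := by rw [z2c, z5c]
        have o_c := aux_orth (A := M₆₁) (B := M₄₃) h6125 h4325
        have o_d := aux_orth (A := M₆₁) (B := R236) h6125 e25Y
        have crossL := aux_cross_of_orth o_c o_d hv25
        have k0 : M₄₃ 0 - M₆₁ 0 = (1-t)*(M₄₃ 0 - M₂₅ 0) := by rw [ht0]; ring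
        have k1 : M₄₃ 1 - M₆₁ 1 = (1-t)*(M₄₃ 1 - M₂₅ 1) := by rw [ht1]; ring
        have h1t : (1 : ℝ) - t ≠ 0 := sub_ne_zero.mpr (Ne.symm ht_ne1)
        have crossd : (M₄₃ 0 - M₂₅ 0)*(R236 1 - M₆₁ 1)
            - (M₄₃ 1 - M₂₅ 1)*(R236 0 - M₆₁ 0) = 0 := by
          have h2 : (1-t)*((M₄₃ 0 - M₂₅ 0)*(R236 1 - M₆₁ 1)
              - (M₄₃ 1 - M₂₅ 1)*(R236 0 - M₆₁ 0)) = 0 := by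
            linear_combination crossL - (R236 1 - M₆₁ 1)*k0 + (R236 0 - M₆₁ 0)*k1
          exact (mul_eq_zero.mp h2).resolve_left h1t
        obtain ⟨k, hk0, hk1⟩ := aux_param (d0 := M₄₃ 0 - M₂₅ 0) (d1 := M₄₃ 1 - M₂₅ 1)
          (z0 := R236 0 - M₆₁ 0) (z1 := R236 1 - M₆₁ 1) (by linear_combination crossd) hd
        have hy0' : R236 0 = M₂₅ 0 + (t + k)*(M₄₃ 0 - M₂₅ 0) := by
          linear_combination ht0 + hk0
        have hy1' : R236 1 = M₂₅ 1 + (t + k)*(M₄₃ 1 - M₂₅ 1) := by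
          linear_combination ht1 + hk1
        have py5 : power R236 O₅ R₅
            = ((t+k) - t)*((t+k) - 1)*((M₄₃ 0 - M₂₅ 0)^2 + (M₄₃ 1 - M₂₅ 1)^2) :=
          aux_secant (O := O₅) (r := R₅) (U := M₆₁) (V := M₄₃) (Y := R236)
            (m0 := M₂₅ 0) (m1 := M₂₅ 1) (e0 := M₄₃ 0 - M₂₅ 0) (e1 := M₄₃ 1 - M₂₅ 1)
            (α := t) (β := 1) (y := t + k)
            ht0 ht1 (by ring) (by ring) hy0' hy1' z5b z5c ht_ne1
        have py3 : power R236 O₃ R₃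
            = ((t+k) - t)*((t+k) - 0)*((M₄₃ 0 - M₂₅ 0)^2 + (M₄₃ 1 - M₂₅ 1)^2) :=
          aux_secant (O := O₃) (r := R₃) (U := M₆₁) (V := M₂₅) (Y := R236)
            (m0 := M₂₅ 0) (m1 := M₂₅ 1) (e0 := M₄₃ 0 - M₂₅ 0) (e1 := M₄₃ 1 - M₂₅ 1)
            (α := t) (β := 0) (y := t + k)
            ht0 ht1 (by ring) (by ring) hy0' hy1' z3b z3c ht_ne0
        have hk' : k*((M₄₃ 0 - M₂₅ 0)^2 + (M₄₃ 1 - M₂₅ 1)^2) = 0 := by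
          linear_combination -py3 + py5 + e35Y
        have hk_eq : k = 0 := by
          exact (mul_eq_zero.mp hk').resolve_right hDpos.ne'
        have : R236 = M₆₁ := by
          apply aux_pt_ext
          · rw [hy0', hk_eq, ht0]; ring
          · rw [hy1', hk_eq, ht1]; ring
        exact hne61236 this.symm
    · exact aux_mem_span h46 hcross

end
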